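/- arXiv:2507.15185 — 5 statements merged into one kernel-verified Lean document; each statement's English description precedes it below -/
import Mathlib

section
/- Let z_1, ..., z_m be the values |⟨x − x*, a_i⟩| for rows a_i of a matrix A with unit-norm rows, and let q' ∈ (0,1). The q'-quantile of {z_1, ..., z_m} (the ⌊q'm⌋-th smallest value) satisfies Q̃_{q'}(x) ≤ (σ_max(A)·√n / (√m·√(1−q'))) · ‖x − x*‖/√n. Equivalently, Q̃_{q'}(x) ≤ σ_max(A)·‖x − x*‖/(√m·√(1−q')). -/
open scoped RealInnerProductSpace

/-- The `q`-quantile of a multiset of reals: its `⌊q⬝card⌋`-th smallest element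
(1-indexed), where the index is taken to be `1` if `⌊q⬝card⌋ < 1`. -/
noncomputable def quantile (s : Multiset ℝ) (q : ℝ) : ℝ :=
  (s.sort (· ≤ ·)).getD (max (Nat.floor (q * s.card)) 1 - 1) 0

set_option maxHeartbeats 1600000 in
/-- Upper bound for the uncorrupted quantile: for a matrix with unit-norm rows `a_i`
and largest singular value bounded by `smax`, the `q'`-quantile of the ideal residuals
`|⟨x - x*, a_i⟩|` satisfies
`Q̃_{q'}(x) ≤ (smax √n/(√m √(1-q'))) ⬝ ‖x - x*‖/√n = smax ‖x - x*‖/(√m √(1-q'))`. -/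
theorem ideal_quantile_upper_bound (m n : ℕ) (hm : 0 < m) (hn : 0 < n)
    (a : Fin m → EuclideanSpace ℝ (Fin n)) (ha : ∀ i, ‖a i‖ = 1)
    (smax : ℝ) (hs0 : 0 ≤ smax)
    (hsig : ∀ y : EuclideanSpace ℝ (Fin n),
      Real.sqrt (∑ i, ⟪a i, y⟫ ^ 2) ≤ smax * ‖y‖)
    (x xs : EuclideanSpace ℝ (Fin n)) (q' : ℝ) (hq' : q' ∈ Set.Ioo (0:ℝ) 1) :
    quantile (Multiset.map (fun i => |⟪x - xs, a i⟫|) Finset.univ.val) q' ≤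
        (smax * Real.sqrt n / (Real.sqrt m * Real.sqrt (1 - q'))) * (‖x - xs‖ / Real.sqrt n) ∧
      (smax * Real.sqrt n / (Real.sqrt m * Real.sqrt (1 - q'))) * (‖x - xs‖ / Real.sqrt n)
        = smax * ‖x - xs‖ / (Real.sqrt m * Real.sqrt (1 - q')) := by
  obtain ⟨hq0, hq1⟩ := hq'
  set y := x - xs with hy
  have hmr : (0:ℝ) < (m:ℝ) := by exact_mod_cast hm
  have hn0 : (0:ℝ) < Real.sqrt n := Real.sqrt_pos.2 (by exact_mod_cast hn)
  have hm0 : (0:ℝ) < Real.sqrt m := Real.sqrt_pos.2 hmr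
  have hq0' : (0:ℝ) < Real.sqrt (1 - q') := Real.sqrt_pos.2 (by linarith)
  have heq : (smax * Real.sqrt n / (Real.sqrt m * Real.sqrt (1 - q'))) * (‖y‖ / Real.sqrt n)
      = smax * ‖y‖ / (Real.sqrt m * Real.sqrt (1 - q')) := by
    field_simp
  refine ⟨?_, heq⟩
  rw [heq]
  set s := Multiset.map (fun i => |⟪y, a i⟫|) (Finset.univ.val : Multiset (Fin m)) with hs
  have hcard : s.card = m := by simp [hs]
  set l := s.sort (· ≤ ·) with hl
  have hlen : l.length = m := by rw [hl, Multiset.length_sort, hcard]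
  have hsorted : l.Pairwise (· ≤ ·) := s.pairwise_sort _
  set K := max (Nat.floor (q' * m)) 1 with hK
  have hK1 : 1 ≤ K := le_max_right _ _
  have hfloor : Nat.floor (q' * m) ≤ m := by
    have h1 : q' * m ≤ (m:ℝ) := by nlinarith
    calc Nat.floor (q' * m) ≤ Nat.floor ((m:ℝ)) := Nat.floor_le_floor h1
      _ = m := Nat.floor_natCast m
  have hKm : K ≤ m := max_le hfloor hm
  set k := K - 1 with hk
  have hkm : k < m := by omega
  have hkl : k < l.length := by omega
  have hkf : k ≤ Nat.floor (q' * m) := by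
    have h1 : K ≤ Nat.floor (q' * m) + 1 := max_le (Nat.le_succ _) (by omega)
    omega
  have hQdef : quantile s q' = l.get ⟨k, hkl⟩ := by
    rw [quantile, hcard, List.getD_eq_getElem _ _ hkl]; rfl
  have hmem : ∀ z ∈ l, 0 ≤ z := by
    intro z hz
    rw [hl, Multiset.mem_sort, hs] at hz
    obtain ⟨i, _, rfl⟩ := Multiset.mem_map.1 hz
    exact abs_nonneg _
  set Q := l.get ⟨k, hkl⟩ with hQ
  have hQ0 : 0 ≤ Q := hmem _ (l.get_mem ⟨k, hkl⟩)
  -- total sum of squares is controlled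
  have hsum : ∑ i : Fin m, ⟪a i, y⟫ ^ 2 ≤ (smax * ‖y‖) ^ 2 := by
    have h1 := hsig y
    have h2 : 0 ≤ ∑ i : Fin m, ⟪a i, y⟫ ^ 2 := Finset.sum_nonneg fun i _ => sq_nonneg _
    nlinarith [Real.sq_sqrt h2, Real.sqrt_nonneg (∑ i : Fin m, ⟪a i, y⟫ ^ 2)]
  -- list sum of squares equals the inner-product sum of squares
  have hlistsum : ∑ j ∈ Finset.range m, (l.getD j 0) ^ 2 = ∑ i : Fin m, ⟪a i, y⟫ ^ 2 := by
    have e1 : ∑ j ∈ Finset.range m, (l.getD j 0) ^ 2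
        = ∑ i : Fin l.length, (l.get i) ^ 2 := by
      rw [← hlen, ← Fin.sum_univ_eq_sum_range (fun j => (l.getD j 0) ^ 2) l.length]
      refine Finset.sum_congr rfl fun i _ => ?_
      rw [List.getD_eq_getElem _ _ i.2]; rfl
    have e2 : ∑ i : Fin l.length, (l.get i) ^ 2 = (l.map (fun z => z ^ 2)).sum := by
      simpa using Fin.sum_univ_fun_getElem l (fun z => z ^ 2)
    have e3 : (l.map (fun z => z ^ 2)).sum = (Multiset.map (fun z => z ^ 2) s).sum := by
      rw [← Multiset.sum_coe, ← Multiset.map_coe, hl, Multiset.sort_eq]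
    have e4 : (Multiset.map (fun z => z ^ 2) s).sum = ∑ i : Fin m, ⟪a i, y⟫ ^ 2 := by
      rw [hs, Multiset.map_map]
      rw [Finset.sum_eq_multiset_sum]
      refine congrArg Multiset.sum (Multiset.map_congr rfl fun i _ => ?_)
      rw [Function.comp_apply, sq_abs, real_inner_comm]
    rw [e1, e2, e3, e4]
  -- lower bound on the total sum from the quantile
  have hlower : ((m - k : ℕ) : ℝ) * Q ^ 2 ≤ ∑ j ∈ Finset.range m, (l.getD j 0) ^ 2 := by
    have c1 : ((m - k : ℕ) : ℝ) * Q ^ 2 = ∑ _j ∈ Finset.Ico k m, Q ^ 2 := by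
      rw [Finset.sum_const, Nat.card_Ico, nsmul_eq_mul]
    rw [c1]
    refine le_trans (Finset.sum_le_sum fun j hj => ?_)
      (Finset.sum_le_sum_of_subset_of_nonneg ?_ fun j _ _ => sq_nonneg _)
    · obtain ⟨hj1, hj2⟩ := Finset.mem_Ico.1 hj
      have hjl : j < l.length := by omega
      have hle : Q ≤ l.get ⟨j, hjl⟩ :=
        hsorted.rel_get_of_le (by exact_mod_cast hj1 : (⟨k, hkl⟩ : Fin l.length) ≤ ⟨j, hjl⟩)
      rw [List.getD_eq_getElem _ _ hjl]
      exact pow_le_pow_left₀ hQ0 hle 2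
    · intro j hj
      exact Finset.mem_range.2 (Finset.mem_Ico.1 hj).2
  -- cardinality bound
  have hcount : (m:ℝ) * (1 - q') ≤ ((m - k : ℕ) : ℝ) := by
    rw [Nat.cast_sub hkm.le]
    have h1 : (k:ℝ) ≤ q' * m := by
      calc (k:ℝ) ≤ (Nat.floor (q' * m) : ℝ) := by exact_mod_cast hkf
        _ ≤ q' * m := Nat.floor_le (by positivity)
    nlinarith
  -- combine
  have hfinal : (m:ℝ) * (1 - q') * Q ^ 2 ≤ (smax * ‖y‖) ^ 2 := by
    have := hlower.trans (hlistsum.le.trans hsum)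
    nlinarith [sq_nonneg Q]
  have hQgoal : quantile s q' = Q := hQdef
  rw [hQgoal, le_div_iff₀ (by positivity)]
  have hD2 : (Real.sqrt m * Real.sqrt (1 - q')) ^ 2 = (m:ℝ) * (1 - q') := by
    rw [mul_pow, Real.sq_sqrt hmr.le, Real.sq_sqrt (by linarith)]
  nlinarith [hfinal, hD2, mul_nonneg hQ0 (mul_nonneg hm0.le hq0'.le),
    mul_nonneg hs0 (norm_nonneg y), sq_nonneg (Q * (Real.sqrt m * Real.sqrt (1 - q')) - smax * ‖y‖)]
end

section
/- Let z_1 ≤ z_2 ≤ ... ≤ z_m be real numbers (residuals over all m rows), and suppose at most βm of the indices are 'corrupted'. Let q ∈ (β, 1−β). Then the q-quantile of the full (possibly corrupted) residual multiset lies between the (q−β)-quantile and the (q+β)-quantile of the uncorrupted residual multiset: Q̃_{q−β}(x) ≤ Q_q(x) ≤ Q̃_{q+β}(x). -/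
open scoped RealInnerProductSpace Classical

lemma list_count_le (l : List ℝ) (hl : l.Pairwise (· ≤ ·)) (j : ℕ) (hj : j < l.length) :
    j + 1 ≤ l.countP (fun x => decide (x ≤ l.getD j 0)) := by
  have hgd : l.getD j 0 = l[j] := by
    simp [List.getD_eq_getElem?_getD, List.getElem?_eq_getElem hj]
  have h1 : (l.take (j + 1)).countP (fun x => decide (x ≤ l.getD j 0))
      = (l.take (j + 1)).length := by
    rw [List.countP_eq_length]
    intro x hx
    rw [List.mem_iff_getElem] at hx
    obtain ⟨i, hi, rfl⟩ := hx
    have hi' : i < l.length := lt_of_lt_of_le hi (List.length_take_le' _ _)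
    have hij : i ≤ j := by
      have := hi; rw [List.length_take] at this; omega
    rw [List.getElem_take, hgd]
    simp only [decide_eq_true_eq]
    exact hl.rel_get_of_le (a := ⟨i, hi'⟩) (b := ⟨j, hj⟩) hij
  have h2 : (l.take (j + 1)).length = j + 1 := List.length_take_of_le (by omega)
  calc j + 1 = (l.take (j + 1)).countP (fun x => decide (x ≤ l.getD j 0)) := by rw [h1, h2]
    _ ≤ l.countP (fun x => decide (x ≤ l.getD j 0)) := List.Sublist.countP_le (List.take_sublist _ _)

lemma list_le_of_count (l : List ℝ) (hl : l.Pairwise (· ≤ ·)) (k : ℕ) (c : ℝ)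
    (h : k + 1 ≤ l.countP (fun x => decide (x ≤ c))) : l.getD k 0 ≤ c := by
  have hk : k < l.length := lt_of_lt_of_le h List.countP_le_length
  have hgd : l.getD k 0 = l[k] := by
    simp [List.getD_eq_getElem?_getD, List.getElem?_eq_getElem hk]
  rw [hgd]
  by_contra hc
  push_neg at hc
  have hsplit : l.countP (fun x => decide (x ≤ c))
      = (l.take k).countP (fun x => decide (x ≤ c)) + (l.drop k).countP (fun x => decide (x ≤ c)) := by
    rw [← List.countP_append, List.take_append_drop]
  have h1 : (l.take k).countP (fun x => decide (x ≤ c)) ≤ k :=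
    le_trans List.countP_le_length (List.length_take_le _ _)
  have h2 : (l.drop k).countP (fun x => decide (x ≤ c)) = 0 := by
    rw [List.countP_eq_zero]
    intro x hx
    rw [List.mem_iff_getElem] at hx
    obtain ⟨i, hi, rfl⟩ := hx
    rw [List.getElem_drop]
    simp only [decide_eq_true_eq, not_le]
    refine lt_of_lt_of_le hc ?_
    exact hl.rel_get_of_le (a := ⟨k, hk⟩)
      (b := ⟨k + i, by rw [List.length_drop] at hi; omega⟩)
      (Fin.mk_le_mk.mpr (Nat.le_add_right k i))
  omega

lemma countP_sort (s : Multiset ℝ) (p : ℝ → Prop) [DecidablePred p] :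
    Multiset.countP p s = (s.sort (· ≤ ·)).countP (fun x => decide (p x)) := by
  conv_lhs => rw [← Multiset.sort_eq s (· ≤ ·), Multiset.coe_countP]

lemma ms_count_le (s : Multiset ℝ) (j : ℕ) (hj : j < Multiset.card s) :
    j + 1 ≤ Multiset.countP (fun x => x ≤ (s.sort (· ≤ ·)).getD j 0) s := by
  rw [countP_sort]
  exact list_count_le (s.sort (· ≤ ·)) (Multiset.pairwise_sort s _) j (by rwa [Multiset.length_sort])

lemma ms_le_of_count (s : Multiset ℝ) (k : ℕ) (c : ℝ)
    (h : k + 1 ≤ Multiset.countP (fun x => x ≤ c) s) :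
    (s.sort (· ≤ ·)).getD k 0 ≤ c := by
  apply list_le_of_count _ (Multiset.pairwise_sort s _)
  rwa [← countP_sort]

lemma key {m : ℕ} (f g : Fin m → ℝ) (B : Finset (Fin m)) (t j : ℕ)
    (hB : B.card ≤ t) (hfg : ∀ i ∉ B, f i = g i) (hjt : j + t < m) :
    ((Multiset.map f Finset.univ.val).sort (· ≤ ·)).getD j 0 ≤
      ((Multiset.map g Finset.univ.val).sort (· ≤ ·)).getD (j + t) 0 := by
  set c := ((Multiset.map g Finset.univ.val).sort (· ≤ ·)).getD (j + t) 0 with hc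
  have hcard : Multiset.card (Multiset.map g Finset.univ.val) = m := by simp
  have h1 := ms_count_le (Multiset.map g Finset.univ.val) (j + t) (by rw [hcard]; exact hjt)
  rw [Multiset.countP_map, ← hc] at h1
  have hA : Multiset.card (Multiset.filter (fun i => g i ≤ c) Finset.univ.val)
      = (Finset.univ.filter (fun i => g i ≤ c)).card := rfl
  rw [hA] at h1
  set A := Finset.univ.filter (fun i => g i ≤ c) with hAdef
  have h2 : j + 1 ≤ (A \ B).card := by
    have := Finset.le_card_sdiff B A
    omega
  have h3 : A \ B ⊆ Finset.univ.filter (fun i => f i ≤ c) := by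
    intro i hi
    rw [Finset.mem_sdiff, hAdef, Finset.mem_filter] at hi
    rw [Finset.mem_filter]
    exact ⟨Finset.mem_univ _, (hfg i hi.2) ▸ hi.1.2⟩
  apply ms_le_of_count
  rw [Multiset.countP_map]
  show j + 1 ≤ Multiset.card (Multiset.filter (fun i => f i ≤ c) Finset.univ.val)
  calc j + 1 ≤ (A \ B).card := h2
    _ ≤ (Finset.univ.filter (fun i => f i ≤ c)).card := Finset.card_le_card h3
    _ = Multiset.card (Multiset.filter (fun i => f i ≤ c) Finset.univ.val) := rfl

/-- Quantile sandwich under `(βm)`-sparse corruption: if at most `βm` measurements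
are corrupted (outside the corruption set `B` one has `b_i = ⟨a_i, x*⟩`), and
`β < q < 1 - β`, then the `q`-quantile of the corrupted residuals lies between the
`(q-β)`- and `(q+β)`-quantiles of the uncorrupted residuals:
`Q̃_{q-β}(x) ≤ Q_q(x) ≤ Q̃_{q+β}(x)`.  (Following the paper's convention, the relevant
proportions of `m` are assumed to be integers.) -/
theorem quantile_sandwich (m n : ℕ) (hm : 0 < m)
    (a : Fin m → EuclideanSpace ℝ (Fin n)) (b : Fin m → ℝ)
    (x xs : EuclideanSpace ℝ (Fin n)) (B : Finset (Fin m)) (β q : ℝ)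
    (hβ : 0 ≤ β) (hq1 : β < q) (hq2 : q < 1 - β)
    (hB : (B.card : ℝ) ≤ β * m)
    (hb : ∀ i ∉ B, b i = ⟪a i, xs⟫)
    (hqm : ∃ k : ℕ, (k : ℝ) = q * m) (hβm : ∃ k : ℕ, (k : ℝ) = β * m)
    (hqβm : ∃ k : ℕ, (k : ℝ) = (q - β) * m) (hqβm' : ∃ k : ℕ, (k : ℝ) = (q + β) * m) :
    quantile (Multiset.map (fun i => |⟪x - xs, a i⟫|) Finset.univ.val) (q - β) ≤
        quantile (Multiset.map (fun i => |b i - ⟪a i, x⟫|) Finset.univ.val) q ∧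
      quantile (Multiset.map (fun i => |b i - ⟪a i, x⟫|) Finset.univ.val) q ≤
        quantile (Multiset.map (fun i => |⟪x - xs, a i⟫|) Finset.univ.val) (q + β) := by
  obtain ⟨k, hk⟩ := hqm
  obtain ⟨t, ht⟩ := hβm
  obtain ⟨k', hk'⟩ := hqβm
  obtain ⟨k'', hk''⟩ := hqβm'
  have hmR : (0 : ℝ) < m := by exact_mod_cast hm
  have htB : B.card ≤ t := by
    have : (B.card : ℝ) ≤ (t : ℝ) := by rw [ht]; exact hB
    exact_mod_cast this
  have hk'k : k' + t = k := by
    have : ((k' + t : ℕ) : ℝ) = (k : ℝ) := by push_cast [hk', ht, hk]; ring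
    exact_mod_cast this
  have hk''k : k'' = k + t := by
    have : (k'' : ℝ) = ((k + t : ℕ) : ℝ) := by push_cast [hk'', ht, hk]; ring
    exact_mod_cast this
  have hk'1 : 1 ≤ k' := by
    have : (0 : ℝ) < (k' : ℝ) := by rw [hk']; exact mul_pos (by linarith) hmR
    exact_mod_cast this
  have hk''m : k'' < m := by
    have : (k'' : ℝ) < (m : ℝ) := by
      rw [hk'']
      calc (q + β) * m < 1 * m := by apply mul_lt_mul_of_pos_right (by linarith) hmR
        _ = m := one_mul _
    exact_mod_cast this
  have hk1 : 1 ≤ k := by omega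
  -- residual functions
  set f : Fin m → ℝ := fun i => |b i - ⟪a i, x⟫| with hf
  set g : Fin m → ℝ := fun i => |⟪x - xs, a i⟫| with hg
  have hfg : ∀ i ∉ B, f i = g i := by
    intro i hi
    simp only [hf, hg, hb i hi]
    rw [inner_sub_left, real_inner_comm x (a i), real_inner_comm xs (a i), abs_sub_comm]
  have hcS : Multiset.card (Multiset.map f Finset.univ.val) = m := by simp
  have hcT : Multiset.card (Multiset.map g Finset.univ.val) = m := by simp
  have eqS : quantile (Multiset.map f Finset.univ.val) q
      = ((Multiset.map f Finset.univ.val).sort (· ≤ ·)).getD (k - 1) 0 := by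
    unfold quantile
    rw [hcS, ← hk, Nat.floor_natCast, max_eq_left hk1]
  have eqT1 : quantile (Multiset.map g Finset.univ.val) (q - β)
      = ((Multiset.map g Finset.univ.val).sort (· ≤ ·)).getD (k' - 1) 0 := by
    unfold quantile
    rw [hcT, ← hk', Nat.floor_natCast, max_eq_left hk'1]
  have eqT2 : quantile (Multiset.map g Finset.univ.val) (q + β)
      = ((Multiset.map g Finset.univ.val).sort (· ≤ ·)).getD (k'' - 1) 0 := by
    unfold quantile
    rw [hcT, ← hk'', Nat.floor_natCast, max_eq_left (by omega)]
  rw [eqS, eqT1, eqT2]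
  constructor
  · have := key g f B t (k' - 1) htB (fun i hi => (hfg i hi).symm) (by omega)
    have hidx : k' - 1 + t = k - 1 := by omega
    rwa [hidx] at this
  · have := key f g B t (k - 1) htB hfg (by omega)
    have hidx : k - 1 + t = k'' - 1 := by omega
    rwa [hidx] at this
end

section
/- Fix x_k ∈ R^n, q ∈ (0,1), ε_u ∈ (0, 1−q), and β ∈ (0, 1−q−ε_u). Suppose the set S_u = {i ∈ [m] : |⟨x_k − x*, a_i⟩| ≤ Q̃_{q+β+ε_u}(x_k)} has cardinality at least (q+ε_u)m. If i_1, ..., i_D are drawn i.i.d. uniformly from [m], then with probability at least 1 − exp(−D_KL(q ‖ q+ε_u)·D), at least qD of the drawn indices lie in S_u, and consequently the q-quantile of the subsampled residuals {|b_{i_j} − ⟨a_{i_j}, x_k⟩|}_{j=1}^D is at most Q̃_{q+β+ε_u}(x_k). -/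
open scoped RealInnerProductSpace Classical

/-- Binary Kullback–Leibler divergence between Bernoulli(p) and Bernoulli(q). -/
noncomputable def klBer (p q : ℝ) : ℝ :=
  p * Real.log (p / q) + (1 - p) * Real.log ((1 - p) / (1 - q))

lemma sorted_getD_le (l : List ℝ) (hl : l.Pairwise (· ≤ ·)) (Q : ℝ) (k : ℕ)
    (hk : k < l.length) (hc : k < l.countP (fun x => decide (x ≤ Q))) :
    l.getD k 0 ≤ Q := by
  by_contra h
  push_neg at h
  have hdrop : (l.drop k).countP (fun x => decide (x ≤ Q)) = 0 := by
    rw [List.countP_eq_zero]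
    intro x hx
    simp only [decide_eq_true_eq]
    rw [List.mem_iff_getElem] at hx
    obtain ⟨i, hi, rfl⟩ := hx
    rw [List.length_drop] at hi
    rw [List.getElem_drop]
    have hki : k + i < l.length := by omega
    have : l.getD k 0 ≤ l[k + i] := by
      rcases Nat.eq_zero_or_pos i with h0 | h0
      · simp [h0, List.getD_eq_getElem, hk]
      · have := List.pairwise_iff_getElem.mp hl k (k+i) hk hki (by omega)
        rw [List.getD_eq_getElem _ _ hk]
        linarith
    linarith
  have heq := List.take_append_drop k l
  have hcount : l.countP (fun x => decide (x ≤ Q)) =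
      (l.take k).countP (fun x => decide (x ≤ Q))
        + (l.drop k).countP (fun x => decide (x ≤ Q)) := by
    conv_lhs => rw [← heq]
    exact List.countP_append
  have htake : (l.take k).countP (fun x => decide (x ≤ Q)) ≤ k := by
    calc (l.take k).countP (fun x => decide (x ≤ Q)) ≤ (l.take k).length :=
          List.countP_le_length
    _ ≤ k := by simp [List.length_take]
  omega

lemma quantile_le (M : Multiset ℝ) (q Q : ℝ) (hq0 : 0 < q) (hq1 : q < 1)
    (hM : 0 < Multiset.card M)
    (h : q * (Multiset.card M) ≤ (Multiset.countP (fun x => x ≤ Q) M : ℝ)) :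
    quantile M q ≤ Q := by
  set cnt := Multiset.countP (fun x => x ≤ Q) M with hcnt
  have hfl : Nat.floor (q * (Multiset.card M : ℝ)) ≤ cnt := by
    have h1 : (Nat.floor (q * (Multiset.card M : ℝ)) : ℝ) ≤ q * Multiset.card M :=
      Nat.floor_le (by positivity)
    exact_mod_cast h1.trans h
  have hone : 1 ≤ cnt := by
    have : (0:ℝ) < cnt := lt_of_lt_of_le (by positivity) h
    exact_mod_cast Nat.one_le_iff_ne_zero.mpr (by exact_mod_cast this.ne')
  have hflcard : Nat.floor (q * (Multiset.card M : ℝ)) < Multiset.card M := by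
    have h1 : (Nat.floor (q * (Multiset.card M : ℝ)) : ℝ) ≤ q * Multiset.card M :=
      Nat.floor_le (by positivity)
    have h2 : q * (Multiset.card M : ℝ) < Multiset.card M := by
      have := (Nat.cast_pos (α := ℝ)).mpr hM
      nlinarith
    exact_mod_cast lt_of_le_of_lt h1 h2
  set k := max (Nat.floor (q * (Multiset.card M : ℝ))) 1 with hk
  have hcntle : cnt ≤ Multiset.card M := Multiset.countP_le_card _ _
  unfold quantile
  apply sorted_getD_le _ (Multiset.pairwise_sort _ _) Q
  · rw [Multiset.length_sort]; omega
  · have hlcount : (M.sort (· ≤ ·)).countP (fun x => decide (x ≤ Q)) = cnt := by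
      rw [hcnt]
      conv_rhs => rw [← Multiset.sort_eq M (· ≤ ·)]
      rw [Multiset.coe_countP]
    rw [hlcount]
    omega

lemma sum_prod_pow (m D : ℕ) (w : Fin m → ℝ) :
    ∑ s : Fin D → Fin m, ∏ j, w (s j) = (∑ i, w i) ^ D := by
  have h1 : (∑ i, w i) ^ D = ∏ _j : Fin D, (∑ i, w i) := by
    simp [Finset.prod_const]
  rw [h1, Finset.prod_univ_sum (fun _ : Fin D => Finset.univ) (fun _ k => w k),
    Fintype.piFinset_univ]

lemma kl_identity (q r : ℝ) (hq0 : 0 < q) (hqr : q < r) (hr1 : r < 1) :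
    Real.exp (Real.log (r*(1-q)/(q*(1-r))) * q) * ((1-r)/(1-q)) =
      Real.exp (-klBer q r) := by
  have hq1 : q < 1 := lt_trans hqr hr1
  have h1q : 0 < 1 - q := by linarith
  have h1r : 0 < 1 - r := by linarith
  have hr0 : 0 < r := lt_trans hq0 hqr
  have hL : Real.log (r*(1-q)/(q*(1-r))) =
      Real.log r + Real.log (1-q) - (Real.log q + Real.log (1-r)) := by
    rw [Real.log_div (by positivity) (by positivity),
      Real.log_mul (by positivity) (by positivity),
      Real.log_mul (by positivity) (by positivity)]
  have hA : ((1-r)/(1-q) : ℝ) = Real.exp (Real.log (1-r) - Real.log (1-q)) := by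
    rw [← Real.log_div (by positivity) (by positivity), Real.exp_log (by positivity)]
  rw [hA, ← Real.exp_add, hL]
  congr 1
  unfold klBer
  rw [Real.log_div (by positivity) (by positivity),
    Real.log_div (by positivity) (by positivity)]
  ring

lemma chernoff (m D : ℕ) (T : Finset (Fin m)) (q r : ℝ)
    (hq0 : 0 < q) (hqr : q < r) (hr1 : r < 1)
    (hT : r * m ≤ (T.card : ℝ)) :
    (((Finset.univ : Finset (Fin D → Fin m)).filter fun s =>
        ¬ (q * D ≤ ((Finset.univ.filter fun j : Fin D => s j ∈ T).card : ℝ))).card : ℝ)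
      ≤ Real.exp (-klBer q r * D) * (m : ℝ) ^ D := by
  classical
  have hq1 : q < 1 := lt_trans hqr hr1
  have h1q : 0 < 1 - q := by linarith
  have h1r : 0 < 1 - r := by linarith
  have hr0 : 0 < r := lt_trans hq0 hqr
  set L : ℝ := Real.log (r*(1-q)/(q*(1-r))) with hLdef
  have hL0 : 0 ≤ L := by
    apply Real.log_nonneg
    rw [le_div_iff₀ (by positivity)]
    nlinarith
  set c : ℝ := Real.exp (-L) with hcdef
  have hc : c = q*(1-r)/(r*(1-q)) := by
    rw [hcdef, Real.exp_neg, Real.exp_log (by positivity), inv_div]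
  have hc0 : 0 < c := Real.exp_pos _
  have hc1 : c ≤ 1 := by
    rw [hcdef, Real.exp_le_one_iff]; linarith
  set w : Fin m → ℝ := fun i => if i ∈ T then c else 1 with hwdef
  set hits : (Fin D → Fin m) → ℕ :=
    fun s => (Finset.univ.filter fun j : Fin D => s j ∈ T).card with hhits
  have hprod : ∀ s : Fin D → Fin m, ∏ j, w (s j) = c ^ hits s := by
    intro s
    rw [hwdef]
    simp only []
    rw [Finset.prod_ite, Finset.prod_const, Finset.prod_const, one_pow, mul_one]
  have hpow : ∀ s : Fin D → Fin m, c ^ hits s = Real.exp (-(L * hits s)) := by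
    intro s
    rw [hcdef, ← Real.exp_nat_mul, mul_comm, neg_mul]
  have hfilT : Finset.univ.filter (fun i => i ∈ T) = T := by
    ext i; simp
  have hcards : (Finset.univ.filter (fun i : Fin m => i ∉ T)).card = m - T.card := by
    have h := Finset.card_filter_add_card_filter_not
      (s := (Finset.univ : Finset (Fin m))) (p := fun i => i ∈ T)
    rw [hfilT] at h
    simp only [Finset.card_univ, Fintype.card_fin] at h
    omega
  have hTm : T.card ≤ m := by
    have := Finset.card_le_card (Finset.subset_univ T)
    simpa [Finset.card_univ] using this
  have hsumw : ∑ i, w i = c * T.card + ((m : ℝ) - T.card) := by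
    rw [hwdef]
    rw [Finset.sum_ite, Finset.sum_const, Finset.sum_const, hfilT, hcards]
    have hcast : ((m - T.card : ℕ) : ℝ) = (m : ℝ) - T.card := by
      push_cast [Nat.cast_sub hTm]; ring
    simp [nsmul_eq_mul, hcast]; ring
  have hsumw_le : ∑ i, w i ≤ (m : ℝ) * ((1-r)/(1-q)) := by
    rw [hsumw]
    have key : r * c + (1 - r) = (1-r)/(1-q) := by
      rw [hc]; field_simp; ring
    nlinarith [hT, hc1, hc0]
  have hsumw_nonneg : 0 ≤ ∑ i, w i := by
    apply Finset.sum_nonneg; intro i _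
    rw [hwdef]; dsimp only; split <;> norm_num [le_of_lt hc0]
  set bad := ((Finset.univ : Finset (Fin D → Fin m)).filter fun s =>
      ¬ (q * D ≤ ((Finset.univ.filter fun j : Fin D => s j ∈ T).card : ℝ))) with hbaddef
  have hterm : ∀ s ∈ bad, (1:ℝ) ≤ Real.exp (L*(q*D)) * c ^ hits s := by
    intro s hs
    rw [hpow s, ← Real.exp_add]
    have hlt : ¬ (q * D ≤ (hits s : ℝ)) := (Finset.mem_filter.mp hs).2
    push_neg at hlt
    calc (1:ℝ) = Real.exp 0 := by simp
    _ ≤ _ := Real.exp_le_exp.mpr (by nlinarith [hL0])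
  have hbad : (bad.card : ℝ) ≤ Real.exp (L*(q*D)) * (∑ i, w i)^D := by
    calc (bad.card : ℝ) = ∑ _s ∈ bad, (1:ℝ) := by simp
    _ ≤ ∑ s ∈ bad, Real.exp (L*(q*D)) * c ^ hits s := Finset.sum_le_sum hterm
    _ ≤ ∑ s : Fin D → Fin m, Real.exp (L*(q*D)) * c ^ hits s :=
        Finset.sum_le_sum_of_subset_of_nonneg (Finset.filter_subset _ _)
          (fun s _ _ => by positivity)
    _ = Real.exp (L*(q*D)) * ∑ s, c ^ hits s := by rw [Finset.mul_sum]
    _ = Real.exp (L*(q*D)) * (∑ i, w i)^D := by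
        rw [← sum_prod_pow]
        congr 1
        exact Finset.sum_congr rfl (fun s _ => (hprod s).symm)
  calc (bad.card : ℝ) ≤ Real.exp (L*(q*D)) * (∑ i, w i)^D := hbad
  _ ≤ Real.exp (L*(q*D)) * ((m : ℝ) * ((1-r)/(1-q)))^D := by
      apply mul_le_mul_of_nonneg_left _ (le_of_lt (Real.exp_pos _))
      exact pow_le_pow_left₀ hsumw_nonneg hsumw_le D
  _ = (Real.exp (L*q) * ((1-r)/(1-q)))^D * (m : ℝ)^D := by
      rw [mul_pow, mul_pow]
      have : Real.exp (L*(q*D)) = Real.exp (L*q) ^ D := by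
        rw [← Real.exp_nat_mul]; ring_nf
      rw [this]; ring
  _ = Real.exp (-klBer q r)^D * (m : ℝ)^D := by
      rw [hLdef, kl_identity q r hq0 hqr hr1]
  _ = Real.exp (-klBer q r * D) * (m : ℝ)^D := by
      rw [← Real.exp_nat_mul]; ring_nf

/-- Subsampled quantile, upper bound.  Let `Q̃ = Q̃_{q+β+ε_u}(x_k)` be the
`(q+β+ε_u)`-quantile of the ideal residuals, and let `S_u` be the set of indices whose
(possibly corrupted) residual is at most `Q̃`; suppose `|S_u| ≥ (q+ε_u) m`.  If
`i_1, …, i_D` are drawn i.i.d. uniformly from `[m]` (modelled by uniform counting over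
all `m^D` tuples), then with probability at least `1 - exp(-D_KL(q‖q+ε_u) D)`, at
least `qD` of the drawn indices lie in `S_u` and consequently the `q`-quantile of the
subsampled residuals is at most `Q̃`. -/
theorem subsampled_quantile_upper (m n D : ℕ) (hm : 0 < m) (hD : 0 < D)
    (a : Fin m → EuclideanSpace ℝ (Fin n)) (ha : ∀ i, ‖a i‖ = 1)
    (b : Fin m → ℝ) (xk xs : EuclideanSpace ℝ (Fin n))
    (q εu β : ℝ) (hq : q ∈ Set.Ioo (0:ℝ) 1) (hεu : εu ∈ Set.Ioo (0:ℝ) (1 - q))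
    (hβ : β ∈ Set.Ioo (0:ℝ) (1 - q - εu))
    (Qtil : ℝ)
    (hQtil : Qtil = quantile (Multiset.map (fun i => |⟪xk - xs, a i⟫|) Finset.univ.val)
        (q + β + εu))
    (Su : Finset (Fin m))
    (hSu : Su = Finset.univ.filter fun i => |b i - ⟪a i, xk⟫| ≤ Qtil)
    (hScard : (q + εu) * m ≤ (Su.card : ℝ)) :
    (1 - Real.exp (-klBer q (q + εu) * D)) * (m : ℝ) ^ D ≤
      ((Finset.univ.filter fun s : Fin D → Fin m =>
          (q * D ≤ ((Finset.univ.filter fun j : Fin D => s j ∈ Su).card : ℝ)) ∧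
          quantile (Multiset.map (fun j : Fin D => |b (s j) - ⟪a (s j), xk⟫|)
            Finset.univ.val) q ≤ Qtil).card : ℝ) := by
  classical
  obtain ⟨hq0, hq1⟩ := hq
  obtain ⟨hεu0, hεu1⟩ := hεu
  have hqr : q < q + εu := by linarith
  have hr1 : q + εu < 1 := by linarith
  -- deterministic part
  have hdet : ∀ s : Fin D → Fin m,
      (q * D ≤ ((Finset.univ.filter fun j : Fin D => s j ∈ Su).card : ℝ)) →
      quantile (Multiset.map (fun j : Fin D => |b (s j) - ⟪a (s j), xk⟫|)
        Finset.univ.val) q ≤ Qtil := by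
    intro s hs
    set M := Multiset.map (fun j : Fin D => |b (s j) - ⟪a (s j), xk⟫|)
      (Finset.univ.val : Multiset (Fin D)) with hM
    have hcard : Multiset.card M = D := by simp [hM]
    apply quantile_le M q Qtil hq0 hq1 (by rw [hcard]; exact hD)
    rw [hcard]
    have h1 : Multiset.countP (fun x => x ≤ Qtil) M
        = (Finset.univ.filter
            fun j : Fin D => |b (s j) - ⟪a (s j), xk⟫| ≤ Qtil).card := by
      rw [hM, Multiset.countP_map]
      rfl
    have h2 : (Finset.univ.filter fun j : Fin D => s j ∈ Su)
        ⊆ (Finset.univ.filter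
            fun j : Fin D => |b (s j) - ⟪a (s j), xk⟫| ≤ Qtil) := by
      intro j hj
      rw [Finset.mem_filter] at hj ⊢
      refine ⟨hj.1, ?_⟩
      have := hj.2
      rw [hSu, Finset.mem_filter] at this
      exact this.2
    have h3 := Finset.card_le_card h2
    rw [h1]
    calc q * (D : ℝ) ≤ ((Finset.univ.filter fun j : Fin D => s j ∈ Su).card : ℝ) := hs
    _ ≤ _ := by exact_mod_cast h3
  -- replace the conjunction by its first component
  have hGP : (Finset.univ.filter fun s : Fin D → Fin m =>
          (q * D ≤ ((Finset.univ.filter fun j : Fin D => s j ∈ Su).card : ℝ)) ∧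
          quantile (Multiset.map (fun j : Fin D => |b (s j) - ⟪a (s j), xk⟫|)
            Finset.univ.val) q ≤ Qtil)
      = (Finset.univ.filter fun s : Fin D → Fin m =>
          (q * D ≤ ((Finset.univ.filter fun j : Fin D => s j ∈ Su).card : ℝ))) := by
    apply Finset.filter_congr
    intro s _
    exact ⟨fun h => h.1, fun h => ⟨h, hdet s h⟩⟩
  rw [hGP]
  have hchern := chernoff m D Su q (q + εu) hq0 hqr hr1 hScard
  have hsplit := Finset.card_filter_add_card_filter_not
    (s := (Finset.univ : Finset (Fin D → Fin m)))
    (p := fun s : Fin D → Fin m =>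
      q * D ≤ ((Finset.univ.filter fun j : Fin D => s j ∈ Su).card : ℝ))
  have hcardu : (Finset.univ : Finset (Fin D → Fin m)).card = m ^ D := by
    simp [Finset.card_univ]
  rw [hcardu] at hsplit
  have hcast : ((Finset.univ.filter fun s : Fin D → Fin m =>
        q * D ≤ ((Finset.univ.filter fun j : Fin D => s j ∈ Su).card : ℝ)).card : ℝ)
      + ((Finset.univ.filter fun s : Fin D → Fin m =>
        ¬ (q * D ≤ ((Finset.univ.filter fun j : Fin D => s j ∈ Su).card : ℝ))).card : ℝ)
      = (m : ℝ) ^ D := by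
    exact_mod_cast congrArg (Nat.cast (R := ℝ)) hsplit
  linarith [hchern, hcast]
end

section
/- Fix x_k ∈ R^n, q ∈ (0,1), ε_l ∈ (0, q), and β ∈ (0, q−ε_l). Let B ⊆ [m] with |B| ≤ βm be the corruption set and B^c its complement. The set S_l = {i ∈ B^c : |⟨x_k − x*, a_i⟩| ≥ Q̃_{(q−β−ε_l)/(1−β)}(x_k, B^c)} has cardinality at least (1−q+ε_l)m. If i_1, ..., i_D are drawn i.i.d. uniformly from [m], then with probability at least 1 − exp(−D_KL(q ‖ q−ε_l)·D), more than (1−q)D of the drawn indices lie in S_l, and consequently the q-quantile of the subsampled residuals is at least Q̃_{(q−β−ε_l)/(1−β)}(x_k, B^c) ≥ Q̃_{q−β−ε_l}(x_k). -/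
open scoped RealInnerProductSpace Classical

section helpers

lemma mem_drop_ge {L : List ℝ} (hL : L.Pairwise (· ≤ ·)) {k : ℕ} (hk : k < L.length)
    {y : ℝ} (hy : y ∈ L.drop k) : L[k] ≤ y := by
  obtain ⟨j, hj, rfl⟩ := List.mem_iff_getElem.mp hy
  have hkj : k + j < L.length := by
    have := hj; simp only [List.length_drop] at this; omega
  rw [List.getElem_drop]
  have : L.get ⟨k, hk⟩ ≤ L.get ⟨k + j, hkj⟩ :=
    hL.rel_get_of_le (by simp [Fin.le_def])
  simpa using this

lemma mem_take_le {L : List ℝ} (hL : L.Pairwise (· ≤ ·)) {k : ℕ} (hk : k < L.length)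
    {y : ℝ} (hy : y ∈ L.take (k+1)) : y ≤ L[k] := by
  obtain ⟨j, hj, rfl⟩ := List.mem_iff_getElem.mp hy
  have hj' : j < k + 1 := by
    have := hj; simp only [List.length_take] at this; omega
  have hjL : j < L.length := by
    have := hj; simp only [List.length_take] at this; omega
  rw [List.getElem_take]
  have : L.get ⟨j, hjL⟩ ≤ L.get ⟨k, hk⟩ := hL.rel_get_of_le (by simp [Fin.le_def]; omega)
  simpa using this

lemma card_filter_eq_countP (M : Multiset ℝ) (p : ℝ → Prop) [DecidablePred p] :
    Multiset.card (M.filter p) = (M.sort (· ≤ ·)).countP (fun y => decide (p y)) := by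
  rw [← Multiset.countP_eq_card_filter]
  conv_lhs => rw [← Multiset.sort_eq M (· ≤ ·)]
  rw [Multiset.coe_countP]

lemma countP_split (L : List ℝ) (p : ℝ → Bool) (j : ℕ) :
    L.countP p = (L.take j).countP p + (L.drop j).countP p := by
  conv_lhs => rw [← List.take_append_drop j L]
  rw [List.countP_append]

lemma quantile_le_s8 (M : Multiset ℝ) (q x : ℝ)
    (h : max (Nat.floor (q * M.card)) 1 ≤ Multiset.card (M.filter (fun y => y ≤ x))) :
    quantile M q ≤ x := by
  set k := max (Nat.floor (q * M.card)) 1 with hk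
  set L := M.sort (· ≤ ·) with hLdef
  have hsort : L.Pairwise (· ≤ ·) := Multiset.pairwise_sort _ _
  have hlen : L.length = Multiset.card M := Multiset.length_sort _
  have hcount : (k:ℕ) ≤ L.countP (fun y => decide (y ≤ x)) := by
    rw [← card_filter_eq_countP]; exact h
  have hkM : k ≤ Multiset.card M := by
    calc k ≤ _ := h
    _ ≤ Multiset.card M := Multiset.card_le_card (Multiset.filter_le _ _)
  have hk1 : 1 ≤ k := le_max_right _ _
  have hidx : k - 1 < L.length := by omega
  by_contra hcon
  push_neg at hcon
  have hqL : quantile M q = L[k-1] := by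
    rw [quantile, ← hLdef, ← hk, List.getD_eq_getElem _ _ hidx]
  rw [hqL] at hcon
  have h2 : (L.drop (k-1)).countP (fun y => decide (y ≤ x)) = 0 := by
    rw [List.countP_eq_zero]
    intro y hy
    have := mem_drop_ge hsort hidx hy
    simp only [decide_eq_true_eq]
    intro hyx
    linarith
  have h3 : (L.take (k-1)).countP (fun y => decide (y ≤ x)) ≤ k - 1 := by
    calc _ ≤ (L.take (k-1)).length := List.countP_le_length
    _ ≤ k - 1 := by simp
  have := countP_split L (fun y => decide (y ≤ x)) (k-1)
  omega

lemma le_quantile (M : Multiset ℝ) (q x : ℝ)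
    (hlen : max (Nat.floor (q * M.card)) 1 ≤ Multiset.card M)
    (h : Multiset.card (M.filter (fun y => y < x)) ≤ max (Nat.floor (q * M.card)) 1 - 1) :
    x ≤ quantile M q := by
  set k := max (Nat.floor (q * M.card)) 1 with hk
  set L := M.sort (· ≤ ·) with hLdef
  have hsort : L.Pairwise (· ≤ ·) := Multiset.pairwise_sort _ _
  have hL : L.length = Multiset.card M := Multiset.length_sort _
  have hk1 : 1 ≤ k := le_max_right _ _
  have hidx : k - 1 < L.length := by omega
  have hqL : quantile M q = L[k-1] := by
    rw [quantile, ← hLdef, ← hk, List.getD_eq_getElem _ _ hidx]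
  by_contra hcon
  push_neg at hcon
  rw [hqL] at hcon
  have h2 : (L.take (k-1+1)).countP (fun y => decide (y < x)) = (L.take (k-1+1)).length := by
    rw [List.countP_eq_length]
    intro y hy
    have := mem_take_le hsort hidx hy
    simp only [decide_eq_true_eq]
    linarith
  have h2' : (L.take (k-1+1)).length = k := by simp; omega
  have h4 : L.countP (fun y => decide (y < x)) ≤ k - 1 := by
    rw [← card_filter_eq_countP]; exact h
  have := countP_split L (fun y => decide (y < x)) (k-1+1)
  omega

lemma count_ge_quantile (M : Multiset ℝ) (q : ℝ)
    (hkM : max (Nat.floor (q * M.card)) 1 ≤ Multiset.card M) :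
    Multiset.card M + 1 - max (Nat.floor (q * M.card)) 1 ≤
      Multiset.card (M.filter (fun y => quantile M q ≤ y)) := by
  set k := max (Nat.floor (q * M.card)) 1 with hk
  set L := M.sort (· ≤ ·) with hLdef
  have hsort : L.Pairwise (· ≤ ·) := Multiset.pairwise_sort _ _
  have hL : L.length = Multiset.card M := Multiset.length_sort _
  have hk1 : 1 ≤ k := le_max_right _ _
  have hidx : k - 1 < L.length := by omega
  have hqL : quantile M q = L[k-1] := by
    rw [quantile, ← hLdef, ← hk, List.getD_eq_getElem _ _ hidx]
  rw [card_filter_eq_countP, ← hLdef]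
  have h2 : (L.drop (k-1)).countP (fun y => decide (quantile M q ≤ y)) = (L.drop (k-1)).length := by
    rw [List.countP_eq_length]
    intro y hy
    have := mem_drop_ge hsort hidx hy
    simp only [decide_eq_true_eq]
    rw [hqL]; exact this
  have := countP_split L (fun y => decide (quantile M q ≤ y)) (k-1)
  have h3 : (L.drop (k-1)).length = L.length - (k-1) := by simp
  omega

lemma count_le_quantile (M : Multiset ℝ) (q : ℝ)
    (hkM : max (Nat.floor (q * M.card)) 1 ≤ Multiset.card M) :
    max (Nat.floor (q * M.card)) 1 ≤
      Multiset.card (M.filter (fun y => y ≤ quantile M q)) := by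
  set k := max (Nat.floor (q * M.card)) 1 with hk
  set L := M.sort (· ≤ ·) with hLdef
  have hsort : L.Pairwise (· ≤ ·) := Multiset.pairwise_sort _ _
  have hL : L.length = Multiset.card M := Multiset.length_sort _
  have hk1 : 1 ≤ k := le_max_right _ _
  have hidx : k - 1 < L.length := by omega
  have hqL : quantile M q = L[k-1] := by
    rw [quantile, ← hLdef, ← hk, List.getD_eq_getElem _ _ hidx]
  rw [card_filter_eq_countP, ← hLdef]
  have h2 : (L.take (k-1+1)).countP (fun y => decide (y ≤ quantile M q)) = (L.take (k-1+1)).length := by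
    rw [List.countP_eq_length]
    intro y hy
    have := mem_take_le hsort hidx hy
    simp only [decide_eq_true_eq]
    rw [hqL]; exact this
  have h2' : (L.take (k-1+1)).length = k := by simp; omega
  have := countP_split L (fun y => decide (y ≤ quantile M q)) (k-1+1)
  omega

end helpers

lemma chernoff_bad_bound (m D : ℕ) (hD : 0 < D) (q εl : ℝ)
    (hq0 : 0 < q) (hq1 : q < 1) (hεl0 : 0 < εl) (hεlq : εl < q)
    (kq : ℕ) (hkq : (kq:ℝ) = q*D) (hkqD : kq < D)
    (Sl : Finset (Fin m)) (hSl1 : (1-q+εl)*m ≤ (Sl.card:ℝ)) :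
    ((Finset.univ.filter (fun s : Fin D → Fin m =>
      ¬ ((1-q)*D < ((Finset.univ.filter fun j : Fin D => s j ∈ Sl).card : ℝ)))).card : ℝ)
    ≤ Real.exp (-klBer q (q-εl) * D) * (m:ℝ)^D := by
  have hDR : (0:ℝ) < D := by exact_mod_cast hD
  have hqεl : (0:ℝ) < q - εl := by linarith
  have h1qεl : (0:ℝ) < 1 - q + εl := by linarith
  have h1q : (0:ℝ) < 1 - q := by linarith
  set cnt : (Fin D → Fin m) → ℕ :=
    fun s => (Finset.univ.filter fun j : Fin D => s j ∈ Sl).card with hcnt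
  set dk : ℕ := D - kq with hdk
  have hdkR : (dk:ℝ) = (1-q)*D := by
    rw [hdk, Nat.cast_sub hkqD.le]
    linarith [hkq]
  set bad := Finset.univ.filter
    (fun s : Fin D → Fin m => ¬ ((1 - q) * D < (cnt s : ℝ))) with hbad
  set r : ℝ := ((1-q)*(q-εl))/(q*(1-q+εl)) with hr
  have hr0 : 0 < r := div_pos (mul_pos h1q hqεl) (mul_pos hq0 h1qεl)
  have hr1 : r ≤ 1 := by
    rw [hr, div_le_one (mul_pos hq0 h1qεl)]; nlinarith
  have hbadmem : ∀ s ∈ bad, r ^ dk ≤ r ^ (cnt s) := by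
    intro s hs
    rw [hbad, Finset.mem_filter] at hs
    have h' : (cnt s : ℝ) ≤ (1-q)*D := le_of_not_gt hs.2
    have hcle : cnt s ≤ dk := by
      have : (cnt s:ℝ) ≤ (dk:ℝ) := by rw [hdkR]; exact h'
      exact_mod_cast this
    exact pow_le_pow_of_le_one (le_of_lt hr0) hr1 hcle
  have hsum1 : (bad.card : ℝ) * r ^ dk ≤ ∑ s ∈ bad, r ^ (cnt s) := by
    have := Finset.card_nsmul_le_sum bad (fun s => r ^ (cnt s)) (r ^ dk) hbadmem
    simpa [nsmul_eq_mul] using this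
  have hsum2 : ∑ s ∈ bad, r ^ (cnt s) ≤ ∑ s : Fin D → Fin m, r ^ (cnt s) :=
    Finset.sum_le_sum_of_subset_of_nonneg (Finset.subset_univ _)
      (fun s _ _ => by positivity)
  have hprod : ∀ s : Fin D → Fin m,
      r ^ (cnt s) = ∏ j : Fin D, (if s j ∈ Sl then r else 1) := by
    intro s
    rw [Finset.prod_ite, Finset.prod_const, Finset.prod_const_one, mul_one, hcnt]
  have hsum3 : ∑ s : Fin D → Fin m, r ^ (cnt s)
      = (∑ i : Fin m, (if i ∈ Sl then r else 1)) ^ D := by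
    rw [Fintype.sum_pow]
    exact Finset.sum_congr rfl (fun s _ => hprod s)
  have hSlm : Sl.card ≤ m := by
    simpa using Finset.card_le_card (Finset.subset_univ Sl)
  have hSlmR : (Sl.card:ℝ) ≤ m := by exact_mod_cast hSlm
  have hsum4 : (∑ i : Fin m, (if i ∈ Sl then r else 1))
      = (Sl.card:ℝ) * r + ((m:ℝ) - Sl.card) := by
    rw [Finset.sum_ite, Finset.sum_const, Finset.sum_const]
    have e1 : Finset.univ.filter (fun i : Fin m => i ∈ Sl) = Sl := by
      ext i; simp
    have e2 : Finset.univ.filter (fun i : Fin m => ¬ (i ∈ Sl)) = Slᶜ := by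
      ext i; simp
    rw [e1, e2, Finset.card_compl, Fintype.card_fin, nsmul_eq_mul, nsmul_eq_mul, mul_one,
      Nat.cast_sub hSlm]
  have hbase : (Sl.card:ℝ) * r + ((m:ℝ) - Sl.card) ≤ (q - εl)/q * m := by
    have key : (1-q+εl)*(1-r) = εl/q := by
      rw [hr]; field_simp; ring
    have h1r : 0 ≤ 1 - r := by linarith
    have hmul : (1-q+εl)*(m:ℝ)*(1-r) ≤ (Sl.card:ℝ)*(1-r) :=
      mul_le_mul_of_nonneg_right hSl1 h1r
    have key2 : (1-q+εl)*(m:ℝ)*(1-r) = εl/q*(m:ℝ) := by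
      rw [show (1-q+εl)*(m:ℝ)*(1-r) = ((1-q+εl)*(1-r))*m from by ring, key]
    have hq' : (q-εl)/q = 1 - εl/q := by field_simp
    rw [hq']
    nlinarith [hmul, key2]
  have hbase0 : (0:ℝ) ≤ (Sl.card:ℝ) * r + ((m:ℝ) - Sl.card) := by
    have : (0:ℝ) ≤ (Sl.card:ℝ) * r := mul_nonneg (by positivity) hr0.le
    linarith
  have hpow : ((Sl.card:ℝ) * r + ((m:ℝ) - Sl.card)) ^ D ≤ ((q-εl)/q * m) ^ D :=
    pow_le_pow_left₀ hbase0 hbase D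
  have hlr : Real.log r
      = Real.log (1-q) + Real.log (q-εl) - Real.log q - Real.log (1-q+εl) := by
    rw [hr, Real.log_div (ne_of_gt (by positivity)) (ne_of_gt (by positivity)),
      Real.log_mul (ne_of_gt h1q) (ne_of_gt hqεl),
      Real.log_mul (ne_of_gt hq0) (ne_of_gt h1qεl)]
    ring
  have hexp_eq : (q-εl)/q = Real.exp (-klBer q (q-εl) + (1-q)*Real.log r) := by
    have hlq : Real.log (q/(q-εl)) = Real.log q - Real.log (q-εl) :=
      Real.log_div (ne_of_gt hq0) (ne_of_gt hqεl)
    have hl1 : Real.log ((1-q)/(1-(q-εl))) = Real.log (1-q) - Real.log (1-q+εl) := by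
      rw [show 1-(q-εl) = 1-q+εl from by ring]
      exact Real.log_div (ne_of_gt h1q) (ne_of_gt h1qεl)
    rw [show -klBer q (q-εl) + (1-q)*Real.log r = Real.log (q-εl) - Real.log q from by
      rw [klBer, hlq, hl1, hlr]; ring]
    rw [← Real.log_div (ne_of_gt hqεl) (ne_of_gt hq0), Real.exp_log (by positivity)]
  have hpow2 : ((q-εl)/q * (m:ℝ)) ^ D
      = Real.exp (-klBer q (q-εl) * D) * r ^ dk * (m:ℝ) ^ D := by
    rw [mul_pow, hexp_eq, ← Real.exp_nat_mul]
    rw [show (D:ℝ) * (-klBer q (q-εl) + (1-q)*Real.log r)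
        = -klBer q (q-εl)*D + (dk:ℝ)*Real.log r from by rw [hdkR]; ring]
    rw [Real.exp_add, Real.exp_nat_mul, Real.exp_log hr0]
  have hchain : (bad.card : ℝ) * r ^ dk
      ≤ (Real.exp (-klBer q (q-εl) * D) * (m:ℝ) ^ D) * r ^ dk := by
    calc (bad.card : ℝ) * r ^ dk ≤ ∑ s ∈ bad, r ^ (cnt s) := hsum1
    _ ≤ ∑ s : Fin D → Fin m, r ^ (cnt s) := hsum2
    _ = (∑ i : Fin m, (if i ∈ Sl then r else 1)) ^ D := hsum3
    _ = ((Sl.card:ℝ) * r + ((m:ℝ) - Sl.card)) ^ D := by rw [hsum4]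
    _ ≤ ((q-εl)/q * m) ^ D := hpow
    _ = Real.exp (-klBer q (q-εl) * D) * r ^ dk * (m:ℝ) ^ D := hpow2
    _ = (Real.exp (-klBer q (q-εl) * D) * (m:ℝ) ^ D) * r ^ dk := by ring
  exact le_of_mul_le_mul_right hchain (pow_pos hr0 dk)


/-- Subsampled quantile, lower bound.  Let `Qc = Q̃_{(q-β-ε_l)/(1-β)}(x_k, Bᶜ)` be the
`(q-β-ε_l)/(1-β)`-quantile of the ideal residuals over the uncorrupted indices, and let
`S_l = {i ∈ Bᶜ : |⟨x_k - x*, a_i⟩| ≥ Qc}`.  Then `|S_l| ≥ (1-q+ε_l) m`; and if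
`i_1, …, i_D` are drawn i.i.d. uniformly from `[m]` (modelled by uniform counting over
all `m^D` tuples), then with probability at least `1 - exp(-D_KL(q‖q-ε_l) D)`, more
than `(1-q)D` of the drawn indices lie in `S_l` and consequently the `q`-quantile of
the subsampled residuals is at least `Qc`; moreover `Q̃_{q-β-ε_l}(x_k) ≤ Qc`.
(Following the paper's convention, the relevant proportions are assumed integral.) -/
theorem subsampled_quantile_lower (m n D : ℕ) (hm : 0 < m) (hD : 0 < D)
    (a : Fin m → EuclideanSpace ℝ (Fin n)) (ha : ∀ i, ‖a i‖ = 1)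
    (b : Fin m → ℝ) (xk xs : EuclideanSpace ℝ (Fin n))
    (q εl β : ℝ) (hq : q ∈ Set.Ioo (0:ℝ) 1) (hεl : εl ∈ Set.Ioo (0:ℝ) q)
    (hβ : β ∈ Set.Ioo (0:ℝ) (q - εl))
    (B : Finset (Fin m)) (hB : (B.card : ℝ) ≤ β * m)
    (hb : ∀ i ∉ B, b i = ⟪a i, xs⟫)
    (hqD : ∃ k : ℕ, (k : ℝ) = q * D)
    (hβm : ∃ k : ℕ, (k : ℝ) = β * m)
    (hrank : ∃ k : ℕ, (k : ℝ) = (q - β - εl) / (1 - β) * Bᶜ.card)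
    (Qc : ℝ)
    (hQc : Qc = quantile (Multiset.map (fun i => |⟪xk - xs, a i⟫|) Bᶜ.val)
        ((q - β - εl) / (1 - β)))
    (Sl : Finset (Fin m))
    (hSl : Sl = Bᶜ.filter fun i => Qc ≤ |⟪xk - xs, a i⟫|) :
    ((1 - q + εl) * m ≤ (Sl.card : ℝ)) ∧
    ((1 - Real.exp (-klBer q (q - εl) * D)) * (m : ℝ) ^ D ≤
      ((Finset.univ.filter fun s : Fin D → Fin m =>
          ((1 - q) * D < ((Finset.univ.filter fun j : Fin D => s j ∈ Sl).card : ℝ)) ∧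
          Qc ≤ quantile (Multiset.map (fun j : Fin D => |b (s j) - ⟪a (s j), xk⟫|)
            Finset.univ.val) q).card : ℝ)) ∧
    quantile (Multiset.map (fun i => |⟪xk - xs, a i⟫|) Finset.univ.val) (q - β - εl) ≤ Qc := by
  obtain ⟨hq0, hq1⟩ := hq
  obtain ⟨hεl0, hεlq⟩ := hεl
  obtain ⟨hβ0, hβq⟩ := hβ
  have h1β : (0:ℝ) < 1 - β := by linarith
  have hmR : (0:ℝ) < m := by exact_mod_cast hm
  have hqβε : (0:ℝ) < q - β - εl := by linarith
  set f : Fin m → ℝ := fun i => |⟪xk - xs, a i⟫| with hf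
  set q' : ℝ := (q - β - εl) / (1 - β) with hq'
  set N : ℕ := Bᶜ.card with hN
  obtain ⟨k₀, hk₀⟩ := hrank
  set Msub : Multiset ℝ := Multiset.map f Bᶜ.val with hMsub
  have hMsubcard : Multiset.card Msub = N := by
    rw [hMsub, Multiset.card_map]; rfl
  have hNR : (1 - β) * m ≤ (N:ℝ) := by
    have : N = m - B.card := by
      rw [hN, Finset.card_compl, Fintype.card_fin]
    have hBm : B.card ≤ m := by
      simpa using (Finset.card_le_card (Finset.subset_univ B))
    have : (N:ℝ) = m - B.card := by
      rw [this, Nat.cast_sub hBm]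
    rw [this]; linarith
  have hN0 : (0:ℝ) < N := by nlinarith [mul_pos h1β hmR]
  have hq'0 : 0 < q' := div_pos hqβε h1β
  have hq'1 : q' ≤ 1 := by
    rw [hq', div_le_one h1β]; linarith
  have hk₀1 : 1 ≤ k₀ := by
    by_contra h
    have : k₀ = 0 := by omega
    rw [this] at hk₀
    have : (0:ℝ) < q' * N := mul_pos hq'0 hN0
    simp at hk₀
    rcases hk₀ with h' | h'
    · rw [h'] at hq'0; linarith
    · rw [h'] at hN0; simp at hN0
  have hk₀N : k₀ ≤ N := by
    have : (k₀:ℝ) ≤ N := by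
      rw [hk₀]
      calc q' * N ≤ 1 * N := by
            apply mul_le_mul_of_nonneg_right hq'1 (le_of_lt hN0)
      _ = N := one_mul _
    exact_mod_cast this
  have hfloor : max (Nat.floor (q' * (Multiset.card Msub : ℝ))) 1 = k₀ := by
    rw [hMsubcard, ← hk₀, Nat.floor_natCast]
    omega
  -- Part 1
  have hSlcard : N + 1 - k₀ ≤ Sl.card := by
    have h1 := count_ge_quantile Msub q' (by rw [hfloor, hMsubcard]; exact hk₀N)
    rw [hfloor, hMsubcard] at h1
    have heq : Multiset.card (Msub.filter (fun y => quantile Msub q' ≤ y)) = Sl.card := by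
      rw [hMsub, Multiset.filter_map]
      rw [Multiset.card_map]
      rw [hSl]
      congr 1
      apply Multiset.filter_congr
      intro x hx
      simp only [Function.comp, ← hQc, hf]
      simp only [hQc, hMsub, hf]
    rw [heq] at h1
    exact h1
  have part1 : (1 - q + εl) * m ≤ (Sl.card : ℝ) := by
    have hcast : ((N + 1 - k₀ : ℕ):ℝ) ≤ (Sl.card:ℝ) := by exact_mod_cast hSlcard
    have hc2 : ((N + 1 - k₀ : ℕ):ℝ) = (N:ℝ) + 1 - k₀ := by
      have : k₀ ≤ N + 1 := by omega
      push_cast [Nat.cast_sub this]; ring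
    rw [hc2] at hcast
    have hNk : (N:ℝ) - k₀ = (N:ℝ) * ((1 - q + εl)/(1-β)) := by
      rw [hk₀, hq']; field_simp; ring
    have : (1 - q + εl) * m ≤ (N:ℝ) - k₀ := by
      rw [hNk]
      have h1qε : 0 ≤ (1 - q + εl)/(1-β) := div_nonneg (by linarith) (le_of_lt h1β)
      calc (1 - q + εl) * m = ((1-β) * m) * ((1 - q + εl)/(1-β)) := by
            field_simp
      _ ≤ (N:ℝ) * ((1 - q + εl)/(1-β)) := mul_le_mul_of_nonneg_right hNR h1qε
    linarith
  refine ⟨part1, ?_, ?_⟩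
  · -- Part 2
    obtain ⟨kq, hkq⟩ := hqD
    have hDR : (0:ℝ) < D := by exact_mod_cast hD
    have hqεl : (0:ℝ) < q - εl := by linarith
    have h1qεl : (0:ℝ) < 1 - q + εl := by linarith
    have hkq1 : 1 ≤ kq := by
      by_contra h
      have hz : kq = 0 := by omega
      rw [hz] at hkq
      have hpos : (0:ℝ) < q * D := mul_pos hq0 hDR
      simp at hkq
      rcases hkq with h' | h'
      · linarith
      · omega
    have hkqD : kq < D := by
      have : (kq:ℝ) < D := by rw [hkq]; nlinarith
      exact_mod_cast this
    have hres : ∀ i : Fin m, i ∉ B → |b i - ⟪a i, xk⟫| = f i := by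
      intro i hi
      have h' : ⟪xk - xs, a i⟫ = ⟪a i, xk⟫ - ⟪a i, xs⟫ := by
        rw [real_inner_comm, inner_sub_right]
      show |b i - ⟪a i, xk⟫| = |⟪xk - xs, a i⟫|
      rw [hb i hi, h', abs_sub_comm]
    have hcons : ∀ s : Fin D → Fin m,
        (1-q)*D < (((Finset.univ.filter fun j : Fin D => s j ∈ Sl).card : ℕ) : ℝ) →
        Qc ≤ quantile (Multiset.map (fun j : Fin D => |b (s j) - ⟪a (s j), xk⟫|)
          Finset.univ.val) q := by
      intro s hs
      set Ms := Multiset.map (fun j : Fin D => |b (s j) - ⟪a (s j), xk⟫|)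
        Finset.univ.val with hMs
      have hMscard : Multiset.card Ms = D := by rw [hMs, Multiset.card_map]; simp
      have hfloorD : max (Nat.floor (q * (Multiset.card Ms : ℝ))) 1 = kq := by
        rw [hMscard, ← hkq, Nat.floor_natCast]; omega
      apply le_quantile
      · rw [hfloorD, hMscard]; omega
      · rw [hfloorD]
        have hcntlt : D - kq < (Finset.univ.filter fun j : Fin D => s j ∈ Sl).card := by
          have h' : ((D - kq : ℕ):ℝ) <
              ((Finset.univ.filter fun j : Fin D => s j ∈ Sl).card : ℝ) := by
            rw [Nat.cast_sub hkqD.le]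
            linarith [hkq, hs]
          exact_mod_cast h'
        have h1 : Multiset.card (Ms.filter (fun y => y < Qc)) =
            (Finset.univ.filter (fun j : Fin D => |b (s j) - ⟪a (s j), xk⟫| < Qc)).card := by
          rw [hMs, Multiset.filter_map, Multiset.card_map, Finset.card_def, Finset.filter_val]
          congr 1
        have h2 : (Finset.univ.filter (fun j : Fin D => |b (s j) - ⟪a (s j), xk⟫| < Qc)) ⊆
            (Finset.univ.filter (fun j : Fin D => s j ∉ Sl)) := by
          intro j hj
          simp only [Finset.mem_filter, Finset.mem_univ, true_and] at hj ⊢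
          intro hmem
          rw [hSl, Finset.mem_filter, Finset.mem_compl] at hmem
          have := hres (s j) hmem.1
          rw [this, hf] at hj
          simp only at hj
          exact absurd hmem.2 (by linarith)
        have h3 : (Finset.univ.filter (fun j : Fin D => s j ∉ Sl)).card
            = D - (Finset.univ.filter fun j : Fin D => s j ∈ Sl).card := by
          rw [Finset.filter_not, Finset.card_sdiff_of_subset (Finset.filter_subset _ _)]
          simp
        calc Multiset.card (Ms.filter (fun y => y < Qc))
            = (Finset.univ.filter (fun j : Fin D => |b (s j) - ⟪a (s j), xk⟫| < Qc)).card := h1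
        _ ≤ (Finset.univ.filter (fun j : Fin D => s j ∉ Sl)).card := Finset.card_le_card h2
        _ = D - (Finset.univ.filter fun j : Fin D => s j ∈ Sl).card := h3
        _ ≤ kq - 1 := by omega
    have hgoal_eq : (Finset.univ.filter fun s : Fin D → Fin m =>
          ((1 - q) * D < ((Finset.univ.filter fun j : Fin D => s j ∈ Sl).card : ℝ)) ∧
          Qc ≤ quantile (Multiset.map (fun j : Fin D => |b (s j) - ⟪a (s j), xk⟫|)
            Finset.univ.val) q)
        = Finset.univ.filter fun s : Fin D → Fin m =>
          (1 - q) * D < (((Finset.univ.filter fun j : Fin D => s j ∈ Sl).card : ℕ) : ℝ) := by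
      apply Finset.filter_congr
      intro s _
      constructor
      · exact And.left
      · intro h; exact ⟨h, hcons s h⟩
    rw [hgoal_eq]
    have hcard_split : (Finset.univ.filter
        (fun s : Fin D → Fin m => (1 - q) * D <
          (((Finset.univ.filter fun j : Fin D => s j ∈ Sl).card : ℕ) : ℝ))).card
        + (Finset.univ.filter
        (fun s : Fin D → Fin m => ¬ ((1 - q) * D <
          (((Finset.univ.filter fun j : Fin D => s j ∈ Sl).card : ℕ) : ℝ)))).card = m ^ D := by
      rw [Finset.card_filter_add_card_filter_not]
      simp [Finset.card_univ]
    have hbadfinal := chernoff_bad_bound m D hD q εl hq0 hq1 hεl0 hεlq kq hkq hkqD Sl part1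
    have h' : ((Finset.univ.filter
        (fun s : Fin D → Fin m => (1 - q) * D <
          (((Finset.univ.filter fun j : Fin D => s j ∈ Sl).card : ℕ) : ℝ))).card : ℝ)
        + ((Finset.univ.filter
        (fun s : Fin D → Fin m => ¬ ((1 - q) * D <
          (((Finset.univ.filter fun j : Fin D => s j ∈ Sl).card : ℕ) : ℝ)))).card : ℝ)
        = (m:ℝ) ^ D := by exact_mod_cast hcard_split
    linarith [hbadfinal, h']

  · -- Part 3
    set Mfull : Multiset ℝ := Multiset.map f Finset.univ.val with hMfull
    have hMfullcard : Multiset.card Mfull = m := by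
      rw [hMfull, Multiset.card_map]; simp
    apply quantile_le_s8
    have hsub : Msub ≤ Mfull := by
      rw [hMsub, hMfull]
      exact Multiset.map_le_map (by
        rw [Finset.val_le_iff]; exact Finset.subset_univ _
        )
    have h1 : k₀ ≤ Multiset.card (Msub.filter (fun y => y ≤ Qc)) := by
      have := count_le_quantile Msub q' (by rw [hfloor, hMsubcard]; exact hk₀N)
      rw [hfloor] at this
      rw [hQc]
      exact this
    have h2 : Multiset.card (Msub.filter (fun y => y ≤ Qc)) ≤
        Multiset.card (Mfull.filter (fun y => y ≤ Qc)) :=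
      Multiset.card_le_card (Multiset.filter_le_filter _ hsub)
    have h3 : max (Nat.floor ((q - β - εl) * (Multiset.card Mfull : ℝ))) 1 ≤ k₀ := by
      rw [hMfullcard]
      have hfl : Nat.floor ((q - β - εl) * (m:ℝ)) ≤ k₀ := by
        have hle : (q - β - εl) * (m:ℝ) ≤ (k₀:ℝ) := by
          rw [hk₀, hq']
          calc (q - β - εl) * (m:ℝ) = ((1-β) * m) * ((q - β - εl)/(1-β)) := by
                field_simp
          _ ≤ (N:ℝ) * ((q - β - εl)/(1-β)) := by
                apply mul_le_mul_of_nonneg_right hNR (by positivity)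
          _ = (q - β - εl)/(1-β) * N := by ring
        calc Nat.floor ((q - β - εl) * (m:ℝ)) ≤ Nat.floor ((k₀:ℝ)) := Nat.floor_le_floor hle
        _ = k₀ := Nat.floor_natCast _
      omega
    calc max (Nat.floor ((q - β - εl) * (Multiset.card Mfull : ℝ))) 1 ≤ k₀ := h3
    _ ≤ _ := le_trans h1 h2
end

section
/- Fix x_k ∈ R^n with x_k ≠ x* and let e_k = x_k − x*. Suppose X_{k+1} = x_k − ⟨a_r, e_k⟩·a_r where r is drawn uniformly from a set of uncorrupted unit-norm rows. For κ ∈ (0,1), with probability at least 1 − κ (over the choice of r), |⟨a_r, e_k⟩| ≤ Q̃_{1−κ}(x_k), and on this event ‖X_{k+1} − x*‖² ≥ ‖e_k‖² − Q̃_{1−κ}(x_k)² ≥ (1 − Φ_{1−κ}²/n)·‖e_k‖², where Φ_{1−κ} = σ_max(A)·√n/(√m·√κ). -/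
open scoped RealInnerProductSpace Classical

lemma sorted_count_le {l : List ℝ} (hl : l.Pairwise (· ≤ ·)) {j : ℕ} (hj : j < l.length)
    {c : ℝ} (hc : l[j] ≤ c) : j + 1 ≤ l.countP (fun x => decide (x ≤ c)) := by
  have hsplit := List.take_append_drop (j+1) l
  have htk : (l.take (j+1)).length = j+1 := by rw [List.length_take]; omega
  have hall : ∀ x ∈ l.take (j+1), decide (x ≤ c) = true := by
    intro x hx
    obtain ⟨i, hi, rfl⟩ := List.mem_iff_getElem.1 hx
    rw [List.getElem_take]
    simp only [decide_eq_true_eq]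
    have hij : i ≤ j := by rw [List.length_take] at hi; omega
    exact le_trans (hl.rel_get_of_le (a := ⟨i, by omega⟩) (b := ⟨j, hj⟩) (Fin.mk_le_mk.2 hij)) hc
  calc j + 1 = (l.take (j+1)).countP (fun x => decide (x ≤ c)) := by
        rw [List.countP_eq_length.2 hall, htk]
    _ ≤ _ := by
        conv_rhs => rw [← hsplit]
        rw [List.countP_append]; omega

lemma sorted_count_ge {l : List ℝ} (hl : l.Pairwise (· ≤ ·)) {j : ℕ} (hj : j < l.length)
    {c : ℝ} (hc : c ≤ l[j]) : l.length - j ≤ l.countP (fun x => decide (c ≤ x)) := by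
  have hsplit := List.take_append_drop j l
  have hdk : (l.drop j).length = l.length - j := by rw [List.length_drop]
  have hall : ∀ x ∈ l.drop j, decide (c ≤ x) = true := by
    intro x hx
    obtain ⟨i, hi, rfl⟩ := List.mem_iff_getElem.1 hx
    rw [List.getElem_drop]
    simp only [decide_eq_true_eq]
    refine le_trans hc (hl.rel_get_of_le (a := ⟨j, hj⟩)
      (b := ⟨j + i, by rw [hdk] at hi; omega⟩) (Fin.mk_le_mk.2 (by omega)))
  calc l.length - j = (l.drop j).countP (fun x => decide (c ≤ x)) := by
        rw [List.countP_eq_length.2 hall, hdk]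
    _ ≤ _ := by
        conv_rhs => rw [← hsplit]
        rw [List.countP_append]; omega

/-- Performance limit of one uncorrupted Kaczmarz step.  With `e_k = x_k - x*` and
`Q̃ = Q̃_{1-κ}(x_k)` the `(1-κ)`-quantile of the ideal residuals, a uniformly chosen row
`r` satisfies `|⟨a_r, e_k⟩| ≤ Q̃` with probability at least `1 - κ` (at least `(1-κ)m`
rows qualify), and for every such row the projected iterate `x_k - ⟨a_r, e_k⟩ • a_r`
satisfies `‖X_{k+1} - x*‖² ≥ ‖e_k‖² - Q̃² ≥ (1 - Φ²/n) ‖e_k‖²`, where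
`Φ = σ_max √n / (√m √κ)`.  ((1-κ)m is assumed integral, per the paper's convention.) -/
theorem uncorrupted_step_lower_bound (m n : ℕ) (hm : 0 < m) (hn : 0 < n)
    (a : Fin m → EuclideanSpace ℝ (Fin n)) (ha : ∀ i, ‖a i‖ = 1)
    (smax : ℝ) (hs0 : 0 ≤ smax)
    (hsig : ∀ y : EuclideanSpace ℝ (Fin n),
      Real.sqrt (∑ i, ⟪a i, y⟫ ^ 2) ≤ smax * ‖y‖)
    (xk xs : EuclideanSpace ℝ (Fin n)) (hne : xk ≠ xs)
    (κ : ℝ) (hκ : κ ∈ Set.Ioo (0:ℝ) 1)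
    (hint : ∃ k : ℕ, (k : ℝ) = (1 - κ) * m) :
    ((1 - κ) * m ≤
        ((Finset.univ.filter fun r : Fin m =>
          |⟪a r, xk - xs⟫| ≤
            quantile (Multiset.map (fun i => |⟪a i, xk - xs⟫|) Finset.univ.val)
              (1 - κ)).card : ℝ)) ∧
      ∀ r : Fin m,
        |⟪a r, xk - xs⟫| ≤
            quantile (Multiset.map (fun i => |⟪a i, xk - xs⟫|) Finset.univ.val) (1 - κ) →
        ‖xk - xs‖ ^ 2 -
            (quantile (Multiset.map (fun i => |⟪a i, xk - xs⟫|) Finset.univ.val) (1 - κ)) ^ 2 ≤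
          ‖(xk - ⟪a r, xk - xs⟫ • a r) - xs‖ ^ 2 ∧
        (1 - (smax * Real.sqrt n / (Real.sqrt m * Real.sqrt κ)) ^ 2 / n) * ‖xk - xs‖ ^ 2 ≤
          ‖xk - xs‖ ^ 2 -
            (quantile (Multiset.map (fun i => |⟪a i, xk - xs⟫|) Finset.univ.val) (1 - κ)) ^ 2 := by
  obtain ⟨hκ0, hκ1⟩ := hκ
  obtain ⟨k, hk⟩ := hint
  set e := xk - xs with he
  set f : Fin m → ℝ := fun i => |⟪a i, e⟫| with hf
  set s : Multiset ℝ := Multiset.map f Finset.univ.val with hs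
  have hscard : Multiset.card s = m := by simp [hs]
  set l : List ℝ := s.sort (· ≤ ·) with hl
  have hlen : l.length = m := by rw [hl, Multiset.length_sort, hscard]
  have hsort : l.Pairwise (· ≤ ·) := Multiset.pairwise_sort _ _
  have hmp : (0:ℝ) < m := by exact_mod_cast hm
  have hk1 : 1 ≤ k := by
    by_contra h
    have hk0 : k = 0 := by omega
    subst hk0
    have h2 : (0:ℝ) < (1 - κ) * m := mul_pos (by linarith) hmp
    rw [← hk] at h2; norm_num at h2
  have hkm : k ≤ m := by
    have : ((k:ℝ)) ≤ (m:ℝ) := by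
      rw [hk]; nlinarith
    exact_mod_cast this
  have hfloor : Nat.floor ((1 - κ) * (Multiset.card s : ℝ)) = k := by
    rw [hscard, ← hk, Nat.floor_natCast]
  set Q : ℝ := quantile s (1 - κ) with hQ
  have hjlt : k - 1 < l.length := by omega
  have hQget : Q = l[k-1] := by
    rw [hQ]
    unfold quantile
    rw [← hl, hfloor, max_eq_left hk1, List.getD_eq_getElem _ _ hjlt]
  have hQmem : Q ∈ s := by
    rw [hQget, ← Multiset.sort_eq s (· ≤ ·), ← hl]
    exact_mod_cast List.getElem_mem hjlt
  have hQ0 : 0 ≤ Q := by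
    rw [hs] at hQmem
    obtain ⟨i, -, hi⟩ := Multiset.mem_map.1 hQmem
    rw [← hi]
    exact abs_nonneg _
  constructor
  · have hcount1 : ((Finset.univ.filter fun r : Fin m => f r ≤ Q).card)
        = l.countP (fun x => decide (x ≤ Q)) := by
      have h1 : ((Finset.univ.filter fun r : Fin m => f r ≤ Q).card)
          = Multiset.countP (fun x => x ≤ Q) s := by
        rw [hs, Multiset.countP_map]
        rfl
      rw [h1, ← Multiset.sort_eq s (· ≤ ·), ← hl, Multiset.coe_countP]
    have hge : k ≤ (Finset.univ.filter fun r : Fin m => f r ≤ Q).card := by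
      rw [hcount1]
      have := sorted_count_le hsort hjlt (le_of_eq hQget.symm)
      omega
    calc (1 - κ) * m = (k : ℝ) := hk.symm
      _ ≤ _ := by exact_mod_cast hge
  · intro r hr
    have hc2 : ⟪a r, e⟫ ^ 2 ≤ Q ^ 2 := by
      rw [← sq_abs]
      exact pow_le_pow_left₀ (abs_nonneg _) hr 2
    constructor
    · have h1 : (xk - ⟪a r, e⟫ • a r) - xs = e - ⟪a r, e⟫ • a r := by
        rw [he]; abel
      have hid : ‖(xk - ⟪a r, e⟫ • a r) - xs‖ ^ 2 = ‖e‖ ^ 2 - ⟪a r, e⟫ ^ 2 := by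
        rw [h1, norm_sub_sq_real, real_inner_smul_right, real_inner_comm e (a r),
          norm_smul, ha r, mul_one, Real.norm_eq_abs, sq_abs]
        ring
      rw [hid]
      linarith
    · have hEpos : (0:ℝ) < ‖e‖ ^ 2 := by
        have hne' : e ≠ 0 := sub_ne_zero.2 hne
        exact pow_pos (norm_pos_iff.mpr hne') 2
      have hcount2 : ((Finset.univ.filter fun i : Fin m => Q ≤ f i).card)
          = l.countP (fun x => decide (Q ≤ x)) := by
        have h1 : ((Finset.univ.filter fun i : Fin m => Q ≤ f i).card)
            = Multiset.countP (fun x => Q ≤ x) s := by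
          rw [hs, Multiset.countP_map]
          rfl
        rw [h1, ← Multiset.sort_eq s (· ≤ ·), ← hl, Multiset.coe_countP]
      set S := (Finset.univ.filter fun i : Fin m => Q ≤ f i) with hS
      have hcard : (m : ℝ) - k ≤ (S.card : ℝ) := by
        have hge : m - k ≤ S.card := by
          rw [hS, hcount2]
          have := sorted_count_ge hsort hjlt (le_of_eq hQget)
          omega
        calc (m:ℝ) - k = ((m - k : ℕ) : ℝ) := by rw [Nat.cast_sub hkm]
          _ ≤ _ := by exact_mod_cast hge
      have hκm : (m:ℝ) - k = κ * m := by rw [hk]; ring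
      have hsum1 : (S.card : ℝ) * Q ^ 2 ≤ ∑ i ∈ S, ⟪a i, e⟫ ^ 2 := by
        have h2 := Finset.card_nsmul_le_sum S (fun i => ⟪a i, e⟫ ^ 2) (Q ^ 2) ?_
        · simpa [nsmul_eq_mul] using h2
        · intro i hi
          have h3 : Q ≤ f i := (Finset.mem_filter.1 hi).2
          calc Q ^ 2 ≤ (f i) ^ 2 := pow_le_pow_left₀ hQ0 h3 2
            _ = ⟪a i, e⟫ ^ 2 := by rw [hf]; exact sq_abs _
      have hsum2 : ∑ i ∈ S, ⟪a i, e⟫ ^ 2 ≤ ∑ i, ⟪a i, e⟫ ^ 2 :=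
        Finset.sum_le_sum_of_subset_of_nonneg (Finset.filter_subset _ _)
          (fun i _ _ => sq_nonneg _)
      have hsum3 : ∑ i, ⟪a i, e⟫ ^ 2 ≤ smax ^ 2 * ‖e‖ ^ 2 := by
        have h1 := hsig e
        have h2 : (0:ℝ) ≤ ∑ i, ⟪a i, e⟫ ^ 2 := Finset.sum_nonneg fun i _ => sq_nonneg _
        nlinarith [Real.sq_sqrt h2, Real.sqrt_nonneg (∑ i, ⟪a i, e⟫ ^ 2), norm_nonneg e]
      have hkey : κ * m * Q ^ 2 ≤ smax ^ 2 * ‖e‖ ^ 2 := by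
        have h1 : κ * m * Q ^ 2 ≤ (S.card : ℝ) * Q ^ 2 := by
          apply mul_le_mul_of_nonneg_right _ (sq_nonneg Q)
          rw [← hκm]; exact hcard
        linarith
      have hΦ : (smax * Real.sqrt n / (Real.sqrt m * Real.sqrt κ)) ^ 2 / n
          = smax ^ 2 / (m * κ) := by
        have hnp : (0:ℝ) < n := by exact_mod_cast hn
        rw [div_pow, mul_pow, mul_pow, Real.sq_sqrt hnp.le, Real.sq_sqrt hmp.le,
          Real.sq_sqrt hκ0.le]
        field_simp
      rw [hΦ]
      have hQle : Q ^ 2 ≤ smax ^ 2 / (m * κ) * ‖e‖ ^ 2 := by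
        rw [div_mul_eq_mul_div, le_div_iff₀ (by positivity)]
        calc Q ^ 2 * (m * κ) = κ * m * Q ^ 2 := by ring
          _ ≤ _ := hkey
      have hexp : (1 - smax ^ 2 / (m * κ)) * ‖e‖ ^ 2
          = ‖e‖ ^ 2 - smax ^ 2 / (m * κ) * ‖e‖ ^ 2 := by ring
      rw [hexp]
      linarith
end
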